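/- For fixed k with 1 ≤ k ≤ n-1, the number of permutations w ∈ S_n such that σ_k ≤_wk w and σ_k·w is a product of pairwise commuting adjacent transpositions (equivalently, σ_k·w avoids 231, 312, and 321) equals F_{k+1}·F_{n-k+1}, where F_i is the i-th Fibonacci number with F_0 = 0, F_1 = 1. -/

import Mathlib

/-- The adjacent transposition `σ_k = (k, k+1)` (1-indexed values `k`, `k+1`
corresponding to the 0-indexed elements `k-1`, `k` of `Fin n`). -/
def sigk (n k : ℕ) (h : k < n) : Equiv.Perm (Fin n) :=
  Equiv.swap ⟨k - 1, by omega⟩ ⟨k, h⟩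

/-- `σ_k ≤wk w` in the right weak order on `S_n`; equivalently,
`w⁻¹(k) > w⁻¹(k+1)` (1-indexed), i.e. 0-indexed `w⁻¹(k) < w⁻¹(k-1)`. -/
def WkAboveSigma (n k : ℕ) (h : k < n) (w : Equiv.Perm (Fin n)) : Prop :=
  w⁻¹ ⟨k, h⟩ < w⁻¹ ⟨k - 1, by omega⟩

/-- `w` contains the pattern `321`. -/
def Contains321 {n : ℕ} (w : Equiv.Perm (Fin n)) : Prop :=
  ∃ i j k : Fin n, i < j ∧ j < k ∧ w k < w j ∧ w j < w i

/-- `w` contains the pattern `231`. -/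
def Contains231 {n : ℕ} (w : Equiv.Perm (Fin n)) : Prop :=
  ∃ i j k : Fin n, i < j ∧ j < k ∧ w k < w i ∧ w i < w j

/-- `w` contains the pattern `312`. -/
def Contains312 {n : ℕ} (w : Equiv.Perm (Fin n)) : Prop :=
  ∃ i j k : Fin n, i < j ∧ j < k ∧ w j < w k ∧ w k < w i

/-- `w` contains the pattern `3412`. -/
def Contains3412 {n : ℕ} (w : Equiv.Perm (Fin n)) : Prop :=
  ∃ i j k l : Fin n, i < j ∧ j < k ∧ k < l ∧ w k < w l ∧ w l < w i ∧ w i < w j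

def NearId {n : ℕ} (u : Equiv.Perm (Fin n)) : Prop :=
  ∀ i : Fin n, (u i : ℕ) ≤ (i : ℕ) + 1 ∧ (i : ℕ) ≤ (u i : ℕ) + 1

lemma nearId_inv {n : ℕ} {u : Equiv.Perm (Fin n)} (h : NearId u) : NearId u⁻¹ := by
  intro j
  have := h (u⁻¹ j)
  rw [Equiv.Perm.coe_inv, Equiv.apply_symm_apply] at this
  exact ⟨this.2, this.1⟩

lemma not_patterns_of_nearId {n : ℕ} {u : Equiv.Perm (Fin n)} (h : NearId u) :
    ¬Contains231 u ∧ ¬Contains312 u ∧ ¬Contains321 u := by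
  have key : ∀ i j k : Fin n, i < j → j < k → ¬ (u k < u i) := by
    intro i j k hij hjk hlt
    have h1 := (h i).1
    have h2 := (h k).2
    rw [Fin.lt_def] at hij hjk hlt
    omega
  refine ⟨?_, ?_, ?_⟩ <;> rintro ⟨i, j, k, hij, hjk, h1, h2⟩
  · exact key i j k hij hjk h1
  · exact key i j k hij hjk h2
  · exact key i j k hij hjk (h1.trans h2)

lemma contains312_inv {n : ℕ} {u : Equiv.Perm (Fin n)} (h : Contains231 u) :
    Contains312 u⁻¹ := by
  obtain ⟨i, j, k, hij, hjk, h1, h2⟩ := h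
  exact ⟨u k, u i, u j, h1, h2, by simpa using hij, by simpa using hjk⟩

lemma contains321_inv {n : ℕ} {u : Equiv.Perm (Fin n)} (h : Contains321 u) :
    Contains321 u⁻¹ := by
  obtain ⟨i, j, k, hij, hjk, h1, h2⟩ := h
  exact ⟨u k, u j, u i, h1, h2, by simpa using hij, by simpa using hjk⟩

lemma apply_le_of_avoid {n : ℕ} {u : Equiv.Perm (Fin n)} (h312 : ¬Contains312 u)
    (h321 : ¬Contains321 u) : ∀ i : Fin n, (u i : ℕ) ≤ (i : ℕ) + 1 := by
  intro i
  by_contra hc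
  push_neg at hc
  set A : Finset (Fin n) := Finset.univ.filter (fun j => i < j ∧ u j < u i) with hA
  have h1 : (Finset.univ.filter (fun j => u j < u i)).card = (u i : ℕ) := by
    rw [← Fin.card_Iio (u i)]
    apply Finset.card_bij (fun j _ => u j)
    · intro j hj
      simp only [Finset.mem_filter, Finset.mem_univ, true_and] at hj
      simpa using hj
    · intro a ha b hb hab
      exact u.injective hab
    · intro v hv
      refine ⟨u⁻¹ v, ?_, by simp⟩
      simp only [Finset.mem_filter, Finset.mem_univ, true_and, Equiv.Perm.coe_inv, Equiv.apply_symm_apply]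
      simpa using hv
  have h2 : (Finset.univ.filter (fun j : Fin n => j < i)).card = (i : ℕ) := by
    rw [← Fin.card_Iio i]
    congr 1
    ext j
    simp [Finset.mem_Iio]
  have hsub : (Finset.univ.filter (fun j => u j < u i)) ⊆
      A ∪ (Finset.univ.filter (fun j : Fin n => j < i)) := by
    intro j hj
    simp only [Finset.mem_filter, Finset.mem_univ, true_and, Finset.mem_union, hA] at *
    rcases lt_trichotomy i j with h | h | h
    · exact Or.inl ⟨h, hj⟩
    · exact absurd hj (by rw [← h]; exact lt_irrefl _)
    · exact Or.inr h
  have hcard : 2 ≤ A.card := by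
    have hle := Finset.card_le_card hsub
    have hun := Finset.card_union_le A (Finset.univ.filter (fun j : Fin n => j < i))
    rw [h1] at hle
    rw [h2] at hun
    omega
  obtain ⟨j1, hj1, j2, hj2, hne⟩ := Finset.one_lt_card.mp hcard
  simp only [hA, Finset.mem_filter, Finset.mem_univ, true_and] at hj1 hj2
  -- wlog j1 < j2
  rcases lt_trichotomy j1 j2 with ho | ho | ho
  · rcases lt_trichotomy (u j1) (u j2) with hv | hv | hv
    · exact h312 ⟨i, j1, j2, hj1.1, ho, hv, hj2.2⟩
    · exact hne (u.injective hv)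
    · exact h321 ⟨i, j1, j2, hj1.1, ho, hv, hj1.2⟩
  · exact hne ho
  · rcases lt_trichotomy (u j2) (u j1) with hv | hv | hv
    · exact h312 ⟨i, j2, j1, hj2.1, ho, hv, hj1.2⟩
    · exact hne (u.injective hv).symm
    · exact h321 ⟨i, j2, j1, hj2.1, ho, hv, hj2.2⟩

lemma contains231_inv {n : ℕ} {u : Equiv.Perm (Fin n)} (h : Contains312 u) :
    Contains231 u⁻¹ := by
  obtain ⟨i, j, k, hij, hjk, h1, h2⟩ := h
  exact ⟨u j, u k, u i, h1, h2, by simpa using hij, by simpa using hjk⟩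

lemma nearId_of_avoid {n : ℕ} {u : Equiv.Perm (Fin n)} (h231 : ¬Contains231 u)
    (h312 : ¬Contains312 u) (h321 : ¬Contains321 u) : NearId u := by
  intro i
  refine ⟨apply_le_of_avoid h312 h321 i, ?_⟩
  have h312' : ¬Contains312 u⁻¹ := fun hc => h231 (by simpa using contains231_inv hc)
  have h321' : ¬Contains321 u⁻¹ := fun hc => h321 (by simpa using contains321_inv hc)
  have := apply_le_of_avoid h312' h321' (u i)
  simpa using this

lemma chain_up {n : ℕ} {u : Equiv.Perm (Fin n)} (h : NearId u) :
    ∀ i : Fin n, (u i : ℕ) = (i : ℕ) + 1 → ∀ hlt : (i : ℕ) + 1 < n,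
      (u ⟨(i : ℕ) + 1, hlt⟩ : ℕ) = (i : ℕ) := by
  suffices key : ∀ m, ∀ i : Fin n, n - (i : ℕ) = m → (u i : ℕ) = (i : ℕ) + 1 →
      ∀ hlt : (i : ℕ) + 1 < n, (u ⟨(i : ℕ) + 1, hlt⟩ : ℕ) = (i : ℕ) by
    intro i hui hlt
    exact key (n - i) i rfl hui hlt
  intro m
  induction m using Nat.strong_induction_on with
  | _ m ih =>
    intro i hm hui hlt
    by_contra hne
    set i' : Fin n := ⟨(i : ℕ) + 1, hlt⟩ with hi'
    have h1 := (h i').1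
    have h2 := (h i').2
    have hvi' : (i' : ℕ) = (i : ℕ) + 1 := rfl
    have hne2 : (u i' : ℕ) ≠ (i : ℕ) + 1 := by
      intro hcontra
      have : u i' = u i := Fin.ext (by rw [hcontra, hui])
      have := u.injective this
      rw [Fin.ext_iff, hvi'] at this
      omega
    have hval : (u i' : ℕ) = (i : ℕ) + 2 := by omega
    have hlt2 : (i : ℕ) + 2 < n := by have := (u i').isLt; omega
    have hrec := ih (n - ((i : ℕ) + 1)) (by omega) i' (by rw [hvi'])
      (by rw [hval, hvi']) (by rw [hvi']; exact hlt2)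
    -- hrec : u ⟨i+2, _⟩ = i+1 = u i, contradiction
    have : u ⟨(i' : ℕ) + 1, _⟩ = u i := Fin.ext (by rw [hrec, hvi', hui])
    have h3 := congrArg Fin.val (u.injective this)
    simp only [hvi'] at h3
    omega

lemma chain_down {n : ℕ} {u : Equiv.Perm (Fin n)} (h : NearId u) (i : Fin n)
    (hge : 1 ≤ (i : ℕ)) (hui : (u i : ℕ) + 1 = (i : ℕ)) :
    (u ⟨(i : ℕ) - 1, by omega⟩ : ℕ) = (i : ℕ) := by
  have hinv := nearId_inv h
  have hj : (u⁻¹ (u i) : ℕ) = (u i : ℕ) + 1 := by simp [hui]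
  have hlt : (u i : ℕ) + 1 < n := by rw [hui]; exact i.isLt
  have hch := chain_up hinv (u i) hj hlt
  have hii : (⟨(u i : ℕ) + 1, hlt⟩ : Fin n) = i := Fin.ext (by simp [hui])
  rw [hii] at hch
  have h2 : u⁻¹ i = ⟨(i : ℕ) - 1, by omega⟩ := by
    have hv : (u⁻¹ i : ℕ) = (i : ℕ) - 1 := by omega
    exact Fin.ext hv
  have h3 := congrArg u h2
  rw [Equiv.Perm.coe_inv, Equiv.apply_symm_apply] at h3
  rw [← h3]

lemma sigk_inv_app1 (n k : ℕ) (hk1 : 1 ≤ k) (hkn : k < n) (w : Equiv.Perm (Fin n)) :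
    (sigk n k hkn * w)⁻¹ ⟨k - 1, by omega⟩ = w⁻¹ ⟨k, hkn⟩ := by
  rw [mul_inv_rev, Equiv.Perm.mul_apply]
  congr 1
  rw [sigk, Equiv.swap_inv]
  exact Equiv.swap_apply_left _ _

lemma sigk_inv_app2 (n k : ℕ) (hk1 : 1 ≤ k) (hkn : k < n) (w : Equiv.Perm (Fin n)) :
    (sigk n k hkn * w)⁻¹ ⟨k, hkn⟩ = w⁻¹ ⟨k - 1, by omega⟩ := by
  rw [mul_inv_rev, Equiv.Perm.mul_apply]
  congr 1
  rw [sigk, Equiv.swap_inv]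
  exact Equiv.swap_apply_right _ _

lemma lt_of_fixed {n k : ℕ} (hk1 : 1 ≤ k) (hkn : k < n) {u : Equiv.Perm (Fin n)}
    (hni : NearId u) (heq : u ⟨k - 1, by omega⟩ = ⟨k, hkn⟩) :
    u⁻¹ ⟨k, hkn⟩ < u⁻¹ ⟨k - 1, by omega⟩ := by
  have hval : (u ⟨k - 1, by omega⟩ : ℕ) = (k - 1) + 1 := by
    rw [heq]; show k = (k - 1) + 1; omega
  have hch := chain_up hni ⟨k - 1, by omega⟩ hval (by show k - 1 + 1 < n; omega)
  have he : (⟨(k - 1 : ℕ) + 1, by show k - 1 + 1 < n; omega⟩ : Fin n) = ⟨k, hkn⟩ :=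
    Fin.ext (by show (k - 1) + 1 = k; omega)
  rw [he] at hch
  have hk2 : u ⟨k, hkn⟩ = ⟨k - 1, by omega⟩ := Fin.ext hch
  have e1 : u⁻¹ (⟨k - 1, by omega⟩ : Fin n) = ⟨k, hkn⟩ :=
    Equiv.Perm.inv_eq_iff_eq.mpr hk2.symm
  have e2 : u⁻¹ (⟨k, hkn⟩ : Fin n) = ⟨k - 1, by omega⟩ :=
    Equiv.Perm.inv_eq_iff_eq.mpr heq.symm
  rw [e1, e2, Fin.lt_def]
  show k - 1 < k
  omega

lemma lt_of_nearId_ne {n k : ℕ} (hk1 : 1 ≤ k) (hkn : k < n) {u : Equiv.Perm (Fin n)}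
    (hni : NearId u) (hne : u ⟨k - 1, by omega⟩ ≠ ⟨k, hkn⟩) :
    u⁻¹ ⟨k - 1, by omega⟩ < u⁻¹ ⟨k, hkn⟩ := by
  have hninv := nearId_inv hni
  have hX : (u⁻¹ (⟨k - 1, by omega⟩ : Fin n) : ℕ) ≤ (k - 1) + 1 :=
    (hninv ⟨k - 1, by omega⟩).1
  have hY : k ≤ (u⁻¹ (⟨k, hkn⟩ : Fin n) : ℕ) + 1 := (hninv ⟨k, hkn⟩).2
  rw [Fin.lt_def]
  by_contra hc
  push_neg at hc
  have hab : (u⁻¹ (⟨k - 1, by omega⟩ : Fin n) : ℕ) ≠ (u⁻¹ (⟨k, hkn⟩ : Fin n) : ℕ) := by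
    intro hh
    have h2 := u⁻¹.injective (Fin.ext hh)
    have h3 : k - 1 = k := congrArg Fin.val h2
    omega
  have hYv : (u⁻¹ (⟨k, hkn⟩ : Fin n) : ℕ) = k - 1 := by omega
  have hfin : u⁻¹ (⟨k, hkn⟩ : Fin n) = ⟨k - 1, by omega⟩ := Fin.ext hYv
  have := congrArg u hfin
  rw [Equiv.Perm.coe_inv, Equiv.apply_symm_apply] at this
  exact hne this.symm

lemma cond_iff (n k : ℕ) (hk1 : 1 ≤ k) (hkn : k < n) (w : Equiv.Perm (Fin n)) :
    (WkAboveSigma n k hkn w ∧ ¬Contains231 (sigk n k hkn * w) ∧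
      ¬Contains312 (sigk n k hkn * w) ∧ ¬Contains321 (sigk n k hkn * w)) ↔
    (NearId (sigk n k hkn * w) ∧
      (sigk n k hkn * w) ⟨k - 1, by omega⟩ ≠ ⟨k, hkn⟩) := by
  have hinv1 := sigk_inv_app1 n k hk1 hkn w
  have hinv2 := sigk_inv_app2 n k hk1 hkn w
  constructor
  · rintro ⟨hwk, h231, h312, h321⟩
    have hni : NearId (sigk n k hkn * w) := nearId_of_avoid h231 h312 h321
    refine ⟨hni, fun heq => ?_⟩
    have hgt := lt_of_fixed hk1 hkn hni heq
    rw [WkAboveSigma, ← hinv2, ← hinv1] at hwk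
    exact absurd hwk (lt_asymm hgt)
  · rintro ⟨hni, hne⟩
    obtain ⟨h231, h312, h321⟩ := not_patterns_of_nearId hni
    refine ⟨?_, h231, h312, h321⟩
    rw [WkAboveSigma, ← hinv2, ← hinv1]
    exact lt_of_nearId_ne hk1 hkn hni hne

def equivOne (n k : ℕ) (hk1 : 1 ≤ k) (hkn : k < n) :
    {w : Equiv.Perm (Fin n) // WkAboveSigma n k hkn w ∧ ¬Contains231 (sigk n k hkn * w) ∧
      ¬Contains312 (sigk n k hkn * w) ∧ ¬Contains321 (sigk n k hkn * w)} ≃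
    {u : Equiv.Perm (Fin n) // NearId u ∧ u ⟨k - 1, by omega⟩ ≠ ⟨k, hkn⟩} :=
  (Equiv.mulLeft (sigk n k hkn)).subtypeEquiv (fun w => cond_iff n k hk1 hkn w)

/-- Sparse subsets: subsets of `{0, ..., m-2}` with no two consecutive elements. -/
def SpL (m : ℕ) := {S : Finset ℕ // (∀ i ∈ S, i + 1 < m) ∧ ∀ i ∈ S, i + 1 ∉ S}

instance SpL.finite (m : ℕ) : Finite (SpL m) := by
  have : ∀ S : SpL m, S.val ∈ (Finset.range m).powerset := by
    intro S
    rw [Finset.mem_powerset]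
    intro i hi
    exact Finset.mem_range.mpr (by have := S.2.1 i hi; omega)
  apply Finite.of_injective (fun S : SpL m => (⟨S.val, this S⟩ : {T // T ∈ (Finset.range m).powerset}))
  intro a b hab
  simp only [Subtype.mk.injEq] at hab
  exact Subtype.ext hab

def spLEquiv (m : ℕ) : SpL (m + 2) ≃ SpL (m + 1) ⊕ SpL m where
  toFun S :=
    if h : m ∈ S.val then
      Sum.inr ⟨S.val.erase m, by
        constructor
        · intro i hi
          rw [Finset.mem_erase] at hi
          have h1 := S.2.1 i hi.2
          have h2 : i ≠ m - 1 ∨ m = 0 := by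
            rcases Nat.eq_zero_or_pos m with hm | hm
            · exact Or.inr hm
            · refine Or.inl fun hc => S.2.2 i hi.2 ?_
              rw [show i + 1 = m by omega]
              exact h
          have := hi.1
          omega
        · intro i hi hj
          rw [Finset.mem_erase] at hi hj
          exact S.2.2 i hi.2 hj.2⟩
    else
      Sum.inl ⟨S.val, by
        refine ⟨fun i hi => ?_, S.2.2⟩
        have h1 := S.2.1 i hi
        have : i ≠ m := fun hc => h (hc ▸ hi)
        omega⟩
  invFun T :=
    match T with
    | Sum.inl S => ⟨S.val, ⟨fun i hi => by have := S.2.1 i hi; omega, S.2.2⟩⟩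
    | Sum.inr S => ⟨insert m S.val, by
        constructor
        · intro i hi
          rw [Finset.mem_insert] at hi
          rcases hi with hi | hi
          · omega
          · have := S.2.1 i hi; omega
        · intro i hi hj
          rw [Finset.mem_insert] at hi hj
          rcases hi with hi | hi
          · rcases hj with hj | hj
            · omega
            · have := S.2.1 _ hj; omega
          · rcases hj with hj | hj
            · have := S.2.1 _ hi; omega
            · exact S.2.2 i hi hj⟩
  left_inv S := by
    by_cases h : m ∈ S.val
    · simp only [h, dif_pos]
      exact Subtype.ext (Finset.insert_erase h)
    · simp only [h, dif_neg, not_false_iff]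
      exact Subtype.ext rfl
  right_inv T := by
    match T with
    | Sum.inl S =>
      have hm : m ∉ S.val := fun hc => by have := S.2.1 m hc; omega
      simp only [hm, dif_neg, not_false_iff]
      exact congrArg Sum.inl (Subtype.ext rfl)
    | Sum.inr S =>
      have hm : m ∈ insert m S.val := Finset.mem_insert_self m S.val
      have hm' : m ∉ S.val := fun hc => by have := S.2.1 m hc; omega
      simp only [hm, dif_pos]
      refine congrArg Sum.inr ?_
      exact Subtype.ext (Finset.erase_insert hm')

lemma spL_subsingleton_zero : ∀ (S : SpL 0), S.val = ∅ := by
  intro S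
  rw [Finset.eq_empty_iff_forall_notMem]
  exact fun i hi => by have := S.2.1 i hi; omega

lemma spL_card : ∀ m, Nat.card (SpL m) = Nat.fib (m + 1) := by
  intro m
  induction m using Nat.strong_induction_on with
  | _ m ih =>
    match m with
    | 0 =>
      rw [show Nat.fib (0 + 1) = 1 from rfl, Nat.card_eq_one_iff_unique]
      constructor
      · constructor
        intro a b
        apply Subtype.ext
        have ha : (a.val : Finset ℕ) = ∅ :=
          Finset.eq_empty_iff_forall_notMem.mpr (fun i hi => by have := a.2.1 i hi; omega)
        have hb : (b.val : Finset ℕ) = ∅ :=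
          Finset.eq_empty_iff_forall_notMem.mpr (fun i hi => by have := b.2.1 i hi; omega)
        rw [ha, hb]
      · exact ⟨⟨∅, by simp, by simp⟩⟩
    | 1 =>
      rw [show Nat.fib (1 + 1) = 1 from rfl, Nat.card_eq_one_iff_unique]
      constructor
      · constructor
        intro a b
        apply Subtype.ext
        have ha : (a.val : Finset ℕ) = ∅ :=
          Finset.eq_empty_iff_forall_notMem.mpr (fun i hi => by have := a.2.1 i hi; omega)
        have hb : (b.val : Finset ℕ) = ∅ :=
          Finset.eq_empty_iff_forall_notMem.mpr (fun i hi => by have := b.2.1 i hi; omega)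
        rw [ha, hb]
      · exact ⟨⟨∅, by simp, by simp⟩⟩
    | m + 2 =>
      rw [Nat.card_congr (spLEquiv m), Nat.card_sum, ih (m + 1) (by omega), ih m (by omega),
        show m + 2 + 1 = m + 1 + 2 from rfl, Nat.fib_add_two (n := m + 1)]
      exact Nat.add_comm _ _

def splitEquiv (n k : ℕ) (hk1 : 1 ≤ k) (hk2 : k ≤ n - 1) :
    {S : Finset ℕ // (∀ i ∈ S, i + 1 < n) ∧ (∀ i ∈ S, i + 1 ∉ S) ∧ k - 1 ∉ S} ≃
      SpL k × SpL (n - k) where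
  toFun S :=
    (⟨S.val.filter (· < k), by
      constructor
      · intro i hi
        rw [Finset.mem_filter] at hi
        have h1 : i ≠ k - 1 := fun hc => S.2.2.2 (hc ▸ hi.1)
        have := hi.2
        omega
      · intro i hi hj
        rw [Finset.mem_filter] at hi hj
        exact S.2.2.1 i hi.1 hj.1⟩,
     ⟨(S.val.filter (k ≤ ·)).image (· - k), by
      constructor
      · intro j hj
        rw [Finset.mem_image] at hj
        obtain ⟨i, hi, rfl⟩ := hj
        rw [Finset.mem_filter] at hi
        have := S.2.1 i hi.1
        have := hi.2
        omega
      · intro j hj hj2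
        rw [Finset.mem_image] at hj hj2
        obtain ⟨i, hi, rfl⟩ := hj
        obtain ⟨i', hi', hii⟩ := hj2
        rw [Finset.mem_filter] at hi hi'
        have : i' = i + 1 := by omega
        exact S.2.2.1 i hi.1 (this ▸ hi'.1)⟩)
  invFun P :=
    ⟨P.1.val ∪ P.2.val.image (· + k), by
      obtain ⟨⟨A, hA1, hA2⟩, ⟨B, hB1, hB2⟩⟩ := P
      simp only
      refine ⟨?_, ?_, ?_⟩
      · intro i hi
        rw [Finset.mem_union] at hi
        rcases hi with hi | hi
        · have := hA1 i hi; omega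
        · rw [Finset.mem_image] at hi
          obtain ⟨j, hj, rfl⟩ := hi
          have := hB1 j hj
          omega
      · intro i hi hj
        rw [Finset.mem_union] at hi hj
        rcases hi with hi | hi <;> rcases hj with hj | hj
        · exact hA2 i hi hj
        · rw [Finset.mem_image] at hj
          obtain ⟨j, hjB, hjk⟩ := hj
          have := hA1 i hi
          omega
        · rw [Finset.mem_image] at hi
          obtain ⟨j, hjB, rfl⟩ := hi
          have := hA1 _ hj
          omega
        · rw [Finset.mem_image] at hi hj
          obtain ⟨j, hjB, rfl⟩ := hi
          obtain ⟨j', hjB', hjj⟩ := hj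
          have : j' = j + 1 := by omega
          exact hB2 j hjB (this ▸ hjB')
      · intro hc
        rw [Finset.mem_union] at hc
        rcases hc with hc | hc
        · have := hA1 _ hc; omega
        · rw [Finset.mem_image] at hc
          obtain ⟨j, hjB, hjk⟩ := hc
          omega⟩
  left_inv S := by
    apply Subtype.ext
    simp only
    ext i
    simp only [Finset.mem_union, Finset.mem_image, Finset.mem_filter]
    constructor
    · rintro (hi | ⟨x, ⟨j, ⟨hjS, hjk⟩, hx⟩, rfl⟩)
      · exact hi.1
      · rw [← hx, Nat.sub_add_cancel hjk]
        exact hjS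
    · intro hi
      rcases lt_or_ge i k with h | h
      · exact Or.inl ⟨hi, h⟩
      · exact Or.inr ⟨i - k, ⟨i, ⟨hi, h⟩, rfl⟩, by omega⟩
  right_inv P := by
    obtain ⟨⟨A, hA1, hA2⟩, ⟨B, hB1, hB2⟩⟩ := P
    simp only [Prod.mk.injEq]
    refine Prod.ext ?_ ?_
    · apply Subtype.ext
      simp only
      ext i
      simp only [Finset.mem_filter, Finset.mem_union, Finset.mem_image]
      constructor
      · rintro ⟨hi | ⟨j, hj, rfl⟩, hik⟩
        · exact hi
        · exact absurd hik (by omega)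
      · intro hi
        have := hA1 i hi
        exact ⟨Or.inl hi, by omega⟩
    · apply Subtype.ext
      simp only
      ext j
      simp only [Finset.mem_image, Finset.mem_filter, Finset.mem_union]
      constructor
      · rintro ⟨i, ⟨hi | ⟨j', hj', rfl⟩, hik⟩, rfl⟩
        · exact absurd hik (by have := hA1 i hi; omega)
        · rw [Nat.add_sub_cancel]
          exact hj'
      · intro hj
        exact ⟨j + k, ⟨Or.inr ⟨j, hj, rfl⟩, by omega⟩, by omega⟩

def involF {n : ℕ} (S : Finset ℕ) (h1 : ∀ i ∈ S, i + 1 < n) : Fin n → Fin n :=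
  fun i => if h : (i : ℕ) ∈ S then ⟨(i : ℕ) + 1, h1 _ h⟩
    else if h' : (i : ℕ) - 1 ∈ S ∧ 1 ≤ (i : ℕ) then ⟨(i : ℕ) - 1, by have := i.isLt; omega⟩
    else i

lemma involF_mem {n : ℕ} {S : Finset ℕ} {h1 : ∀ i ∈ S, i + 1 < n} {i : Fin n}
    (h : (i : ℕ) ∈ S) : involF S h1 i = ⟨(i : ℕ) + 1, h1 _ h⟩ := by
  rw [involF]
  exact dif_pos h

lemma involF_pred {n : ℕ} {S : Finset ℕ} {h1 : ∀ i ∈ S, i + 1 < n} {i : Fin n}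
    (h : (i : ℕ) ∉ S) (h' : (i : ℕ) - 1 ∈ S ∧ 1 ≤ (i : ℕ)) :
    involF S h1 i = ⟨(i : ℕ) - 1, by have := i.isLt; omega⟩ := by
  rw [involF, dif_neg h]
  exact dif_pos h'

lemma involF_fix {n : ℕ} {S : Finset ℕ} {h1 : ∀ i ∈ S, i + 1 < n} {i : Fin n}
    (h : (i : ℕ) ∉ S) (h' : ¬((i : ℕ) - 1 ∈ S ∧ 1 ≤ (i : ℕ))) :
    involF S h1 i = i := by
  rw [involF, dif_neg h]
  exact dif_neg h'

lemma involF_involutive {n : ℕ} (S : Finset ℕ) (h1 : ∀ i ∈ S, i + 1 < n)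
    (h2 : ∀ i ∈ S, i + 1 ∉ S) : Function.Involutive (involF S h1) := by
  intro i
  by_cases h : (i : ℕ) ∈ S
  · rw [involF_mem h, involF_pred (show (i : ℕ) + 1 ∉ S from h2 _ h)
      (show (i : ℕ) + 1 - 1 ∈ S ∧ 1 ≤ (i : ℕ) + 1 from ⟨by simpa using h, by omega⟩)]
    exact Fin.ext (show (i : ℕ) + 1 - 1 = (i : ℕ) by omega)
  · by_cases h' : (i : ℕ) - 1 ∈ S ∧ 1 ≤ (i : ℕ)
    · have hlt : (i : ℕ) - 1 + 1 < n := by have := h1 _ h'.1; omega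
      rw [involF_pred h h', involF_mem (show ((i : ℕ) - 1 : ℕ) ∈ S from h'.1)]
      exact Fin.ext (show (i : ℕ) - 1 + 1 = (i : ℕ) by omega)
    · rw [involF_fix h h', involF_fix h h']

def involPerm {n : ℕ} (S : Finset ℕ) (h1 : ∀ i ∈ S, i + 1 < n)
    (h2 : ∀ i ∈ S, i + 1 ∉ S) : Equiv.Perm (Fin n) :=
  Function.Involutive.toPerm _ (involF_involutive S h1 h2)

lemma involPerm_apply {n : ℕ} (S : Finset ℕ) (h1 : ∀ i ∈ S, i + 1 < n)
    (h2 : ∀ i ∈ S, i + 1 ∉ S) (i : Fin n) : involPerm S h1 h2 i = involF S h1 i := rfl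

def Su {n : ℕ} (u : Equiv.Perm (Fin n)) : Finset ℕ :=
  ((Finset.univ : Finset (Fin n)).filter (fun i => (u i : ℕ) = (i : ℕ) + 1)).image Fin.val

lemma mem_Su {n : ℕ} {u : Equiv.Perm (Fin n)} {j : ℕ} :
    j ∈ Su u ↔ ∃ hj : j < n, (u ⟨j, hj⟩ : ℕ) = j + 1 := by
  rw [Su]
  simp only [Finset.mem_image, Finset.mem_filter, Finset.mem_univ, true_and]
  constructor
  · rintro ⟨i, hi, rfl⟩
    exact ⟨i.isLt, hi⟩
  · rintro ⟨hj, hval⟩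
    exact ⟨⟨j, hj⟩, hval, rfl⟩

def equivTwo (n k : ℕ) (hk1 : 1 ≤ k) (hkn : k < n) :
    {u : Equiv.Perm (Fin n) // NearId u ∧ u ⟨k - 1, by omega⟩ ≠ ⟨k, hkn⟩} ≃
    {S : Finset ℕ // (∀ i ∈ S, i + 1 < n) ∧ (∀ i ∈ S, i + 1 ∉ S) ∧ k - 1 ∉ S} where
  toFun u := ⟨Su u.val, by
    obtain ⟨u, hu, hne⟩ := u
    refine ⟨?_, ?_, ?_⟩
    · intro j hj
      rw [mem_Su] at hj
      obtain ⟨hjn, hval⟩ := hj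
      have := (u ⟨j, hjn⟩).isLt
      omega
    · intro j hj hj2
      rw [mem_Su] at hj hj2
      obtain ⟨hjn, hval⟩ := hj
      obtain ⟨hjn2, hval2⟩ := hj2
      have hch := chain_up hu ⟨j, hjn⟩ hval hjn2
      have hch' : (u ⟨j + 1, hjn2⟩ : ℕ) = j := hch
      rw [hch'] at hval2
      omega
    · intro hc
      rw [mem_Su] at hc
      obtain ⟨hjn, hval⟩ := hc
      exact hne (Fin.ext (by rw [hval]; show k - 1 + 1 = k; omega))⟩
  invFun S := ⟨involPerm S.val S.2.1 S.2.2.1, by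
    obtain ⟨S, h1, h2, h3⟩ := S
    constructor
    · intro i
      rw [involPerm_apply, involF]
      by_cases h : (i : ℕ) ∈ S
      · rw [dif_pos h]
        show (i : ℕ) + 1 ≤ (i : ℕ) + 1 ∧ (i : ℕ) ≤ (i : ℕ) + 1 + 1
        omega
      · rw [dif_neg h]
        by_cases h' : (i : ℕ) - 1 ∈ S ∧ 1 ≤ (i : ℕ)
        · rw [dif_pos h']
          show (i : ℕ) - 1 ≤ (i : ℕ) + 1 ∧ (i : ℕ) ≤ (i : ℕ) - 1 + 1
          omega
        · rw [dif_neg h']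
          omega
    · intro hc
      have hc' := congrArg Fin.val hc
      rw [involPerm_apply, involF] at hc'
      have hm : ((⟨k - 1, by omega⟩ : Fin n) : ℕ) = k - 1 := rfl
      by_cases h : k - 1 ∈ S
      · exact h3 h
      · rw [dif_neg (by rw [hm]; exact h)] at hc'
        by_cases h' : k - 1 - 1 ∈ S ∧ 1 ≤ k - 1
        · rw [dif_pos (by rw [hm]; exact h')] at hc'
          have : k - 1 - 1 = k := hc'
          omega
        · rw [dif_neg (by rw [hm]; exact h')] at hc'
          have : k - 1 = k := hc'
          omega⟩
  left_inv u := by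
    obtain ⟨u, hu, hne⟩ := u
    apply Subtype.ext
    apply Equiv.ext
    intro i
    simp only [involPerm_apply, involF]
    have htri : (u i : ℕ) = (i : ℕ) + 1 ∨ ((u i : ℕ) + 1 = (i : ℕ)) ∨ (u i : ℕ) = (i : ℕ) := by
      have := hu i
      omega
    rcases htri with hcase | hcase | hcase
    · rw [dif_pos (mem_Su.mpr ⟨i.isLt, hcase⟩)]
      exact Fin.ext hcase.symm
    · have hge : 1 ≤ (i : ℕ) := by omega
      have hni : (i : ℕ) ∉ Su u := by
        rw [mem_Su]
        rintro ⟨hj, hval⟩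
        have : (u ⟨(i : ℕ), hj⟩ : ℕ) = (u i : ℕ) := by rw [Fin.eta]
        omega
      have hcd := chain_down hu i hge hcase
      have hmem : (i : ℕ) - 1 ∈ Su u := by
        rw [mem_Su]
        refine ⟨by have := i.isLt; omega, ?_⟩
        have hcd' : (u ⟨(i : ℕ) - 1, by have := i.isLt; omega⟩ : ℕ) = (i : ℕ) := hcd
        rw [hcd']
        omega
      rw [dif_neg hni, dif_pos ⟨hmem, hge⟩]
      exact Fin.ext (by show (i : ℕ) - 1 = (u i : ℕ); omega)
    · have hni : (i : ℕ) ∉ Su u := by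
        rw [mem_Su]
        rintro ⟨hj, hval⟩
        have : (u ⟨(i : ℕ), hj⟩ : ℕ) = (u i : ℕ) := by rw [Fin.eta]
        omega
      have hni2 : ¬((i : ℕ) - 1 ∈ Su u ∧ 1 ≤ (i : ℕ)) := by
        rintro ⟨hmem, hge⟩
        rw [mem_Su] at hmem
        obtain ⟨hj, hval⟩ := hmem
        have heq : u ⟨(i : ℕ) - 1, hj⟩ = u i := by
          apply Fin.ext
          rw [hval, hcase]
          omega
        have := u.injective heq
        have := congrArg Fin.val this
        simp only at this
        omega
      rw [dif_neg hni, dif_neg hni2]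
      exact Fin.ext (by omega)
  right_inv S := by
    obtain ⟨S, h1, h2, h3⟩ := S
    apply Subtype.ext
    ext j
    simp only
    rw [mem_Su]
    constructor
    · rintro ⟨hj, hval⟩
      rw [involPerm_apply, involF] at hval
      by_cases h : ((⟨j, hj⟩ : Fin n) : ℕ) ∈ S
      · exact h
      · rw [dif_neg h] at hval
        by_cases h' : ((⟨j, hj⟩ : Fin n) : ℕ) - 1 ∈ S ∧ 1 ≤ ((⟨j, hj⟩ : Fin n) : ℕ)
        · rw [dif_pos h'] at hval
          have : j - 1 = j + 1 := hval
          omega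
        · rw [dif_neg h'] at hval
          have : j = j + 1 := hval
          omega
    · intro hj
      have hjn : j < n := by have := h1 j hj; omega
      refine ⟨hjn, ?_⟩
      rw [involPerm_apply, involF, dif_pos (show ((⟨j, hjn⟩ : Fin n) : ℕ) ∈ S from hj)]

/-- For fixed `1 ≤ k ≤ n-1`, the number of `w ∈ S_n` with `σ_k ≤wk w` such that
`σ_k w` is a product of pairwise commuting adjacent transpositions (equivalently,
avoids `231`, `312` and `321`) is `F_{k+1} F_{n-k+1}`. -/
theorem card_boolean_weak_intervals_over_sigma_k (n k : ℕ) (hk1 : 1 ≤ k) (hk2 : k ≤ n - 1) :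
    Nat.card {w : Equiv.Perm (Fin n) // WkAboveSigma n k (by omega) w ∧
      ¬Contains231 (sigk n k (by omega) * w) ∧
      ¬Contains312 (sigk n k (by omega) * w) ∧
      ¬Contains321 (sigk n k (by omega) * w)} =
    Nat.fib (k + 1) * Nat.fib (n - k + 1) := by
  have hkn : k < n := by omega
  rw [Nat.card_congr ((equivOne n k hk1 hkn).trans
    ((equivTwo n k hk1 hkn).trans (splitEquiv n k hk1 hk2)))]
  rw [Nat.card_prod, spL_card k, spL_card (n - k)]
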